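/- f'(t) → 1 as t → ∞. -/

import Mathlib

open Filter Set

/-- `f'(t) → 1` as `t → ∞`. -/
theorem shaYang_deriv_tendsto_one (α : ℝ) (hα : 0 < α) (f : ℝ → ℝ)
    (hf : ContDiff ℝ 2 f) (hf0 : f 0 = 1) (hf'0 : deriv f 0 = 0)
    (hfpos : ∀ t ≥ (0 : ℝ), 0 < f t)
    (hode : ∀ t ≥ (0 : ℝ), deriv (deriv f) t = (α / 2) * (f t) ^ (-α - 1)) :
    Filter.Tendsto (deriv f) Filter.atTop (nhds 1) := by
  have hfd : Differentiable ℝ f := hf.differentiable (by norm_num)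
  have hg1 : ContDiff ℝ 1 (deriv f) := by
    have h2 : ContDiff ℝ (1 + 1) f := by
      convert hf using 2
      norm_num
    exact (contDiff_succ_iff_deriv.mp h2).2.2
  have hgd : Differentiable ℝ (deriv f) := hg1.differentiable one_ne_zero
  set g := deriv f with hg
  -- g is strictly monotone on [0,∞)
  have hgmono : StrictMonoOn g (Set.Ici 0) := by
    apply strictMonoOn_of_deriv_pos (convex_Ici 0) hgd.continuous.continuousOn
    intro x hx
    rw [interior_Ici] at hx
    rw [hode x (le_of_lt hx)]
    have := hfpos x (le_of_lt hx)
    positivity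
  have hgnonneg : ∀ t ≥ (0:ℝ), 0 ≤ g t := by
    intro t ht
    rcases eq_or_lt_of_le ht with h | h
    · rw [← h, hf'0]
    · have := hgmono (Set.mem_Ici.mpr (le_refl 0)) (Set.mem_Ici.mpr (le_of_lt h)) h
      rw [hf'0] at this
      linarith
  -- energy identity
  have hE : ∀ t ≥ (0:ℝ), (g t) ^ 2 + (f t) ^ (-α) = 1 := by
    intro t ht
    have key : ∀ x ∈ Set.Icc (0:ℝ) t,
        (fun s => (g s) ^ 2 + (f s) ^ (-α)) x
          = (fun s => (g s) ^ 2 + (f s) ^ (-α)) 0 := by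
      apply constant_of_has_deriv_right_zero
      · exact ((hgd.continuous.pow 2).continuousOn).add
          ((hfd.continuous.continuousOn).rpow_const
            (fun x hx => Or.inl (ne_of_gt (hfpos x hx.1))))
      · intro x hx
        have hx0 : (0:ℝ) ≤ x := hx.1
        have h1 : HasDerivAt (fun s => (g s) ^ 2)
            (2 * g x ^ 1 * deriv g x) x := by
          exact ((hgd x).hasDerivAt.pow 2).congr_deriv (by ring)
        have h2 : HasDerivAt (fun s => (f s) ^ (-α))
            (deriv f x * (-α) * f x ^ (-α - 1)) x := by
          have := (hfd x).hasDerivAt.rpow_const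
            (p := -α) (Or.inl (ne_of_gt (hfpos x hx0)))
          simpa using this
        have h3 := h1.add h2
        have hz : 2 * g x ^ 1 * deriv g x + deriv f x * (-α) * f x ^ (-α - 1) = 0 := by
          rw [hode x hx0, ← hg]; ring
        rw [hz] at h3
        exact h3.hasDerivWithinAt
    have h := key t ⟨ht, le_refl t⟩
    simp only at h
    rw [h, hf'0, hf0, Real.one_rpow]
    norm_num
  -- f tends to infinity
  have hc : 0 < g 1 := by
    have := hgmono (Set.mem_Ici.mpr (le_refl 0)) (Set.mem_Ici.mpr (by norm_num : (0:ℝ) ≤ 1)) one_pos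
    rw [hf'0] at this; linarith
  have hftop : Tendsto f atTop atTop := by
    have hlin : Tendsto (fun t : ℝ => g 1 * (t - 1) + f 1) atTop atTop := by
      apply tendsto_atTop_add_const_right
      exact (tendsto_atTop_add_const_right atTop (-1) tendsto_id).const_mul_atTop hc
    apply tendsto_atTop_mono' atTop _ hlin
    filter_upwards [eventually_ge_atTop (1:ℝ)] with t ht
    have := (convex_Ici 1).mul_sub_le_image_sub_of_le_deriv
      hfd.continuous.continuousOn hfd.differentiableOn
      (fun x hx => by
        rw [interior_Ici] at hx
        exact hgmono.monotoneOn (by norm_num : (1:ℝ) ∈ Set.Ici 0)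
          (Set.mem_Ici.mpr (le_trans zero_le_one (le_of_lt hx))) (le_of_lt hx))
      1 (Set.mem_Ici.mpr le_rfl) t (Set.mem_Ici.mpr ht) ht
    linarith
  -- conclude
  have h0 : Tendsto (fun t => (f t) ^ (-α)) atTop (nhds 0) :=
    (tendsto_rpow_neg_atTop hα).comp hftop
  have hsub : Tendsto (fun t => 1 - (f t) ^ (-α)) atTop (nhds 1) := by
    simpa using tendsto_const_nhds.sub h0
  have h1 : Tendsto (fun t => Real.sqrt (1 - (f t) ^ (-α))) atTop (nhds 1) := by
    have := (Real.continuous_sqrt.continuousAt (x := (1:ℝ))).tendsto.comp hsub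
    simpa [Function.comp_def] using this
  apply h1.congr'
  filter_upwards [eventually_ge_atTop (0:ℝ)] with t ht
  have := hE t ht
  have h2 : 1 - (f t) ^ (-α) = (g t) ^ 2 := by linarith
  rw [h2, Real.sqrt_sq (hgnonneg t ht)]
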